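/- Let X be a 2-dimensional real normed space and f : S_X → S_Y a surjective isometry onto the unit sphere of a real Banach space Y. Then Y is 2-dimensional. -/

import Mathlib

open Metric Set Function Module
open Submodule

lemma exists_not_mem_four {E : Type*} [AddCommGroup E] [Module ℝ E]
    (p : Fin 4 → Submodule ℝ E) (h : ∀ i, p i ≠ ⊤) :
    ∃ c : E, ∀ i, c ∉ p i := by
  by_contra hc
  push_neg at hc
  have : ⋃ i, ((p i : Set E)) = Set.univ := by
    ext v; simp only [Set.mem_iUnion, Set.mem_univ, iff_true]
    obtain ⟨i, hi⟩ := hc v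
    exact ⟨i, hi⟩
  obtain ⟨i, hi⟩ := Subspace.exists_eq_top_of_iUnion_eq_univ this
  exact h i hi

lemma span_pair_ne_top {E : Type*} [AddCommGroup E] [Module ℝ E] [Module.Finite ℝ E]
    (h3 : 3 ≤ finrank ℝ E) (a b : E) : span ℝ {a, b} ≠ ⊤ := by
  intro h
  have h1 : finrank ℝ (span ℝ ({a, b} : Set E)) ≤ 2 := by
    classical
    refine (finrank_span_le_card ({a, b} : Set E)).trans ?_
    have : ({a, b} : Set E).toFinset ⊆ {a, b} := by
      intro x hx; simpa using Set.mem_toFinset.mp hx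
    calc ({a,b} : Set E).toFinset.card ≤ ({a,b} : Finset E).card := Finset.card_le_card this
      _ ≤ 2 := Finset.card_insert_le _ _ |>.trans (by simp)
  rw [h, finrank_top] at h1
  omega

section ClaimA
variable {E : Type*} [NormedAddCommGroup E] [NormedSpace ℝ E] [Module.Finite ℝ E]

/-- key: segment avoidance. -/
lemma segment_avoid {a c w : E} (S : Submodule ℝ E)
    (ha : a ∉ S) (hc : c ∉ span ℝ {a} ⊔ S) (hw : w ∈ segment ℝ a c) : w ∉ S := by
  intro hwS
  obtain ⟨t1, t2, ht1, ht2, hsum, rfl⟩ := hw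
  rcases eq_or_lt_of_le ht2 with h0 | h0
  · have : t1 = 1 := by linarith
    subst this
    rw [← h0] at hwS
    simp at hwS
    exact ha hwS
  · apply hc
    have : c = t2⁻¹ • ((t1 • a + t2 • c) - t1 • a) := by
      rw [add_sub_cancel_left, smul_smul, inv_mul_cancel₀ h0.ne', one_smul]
    rw [this]
    refine Submodule.smul_mem _ _ (Submodule.sub_mem _ ?_ ?_)
    · exact Submodule.mem_sup_right hwS
    · exact Submodule.smul_mem _ _ (Submodule.mem_sup_left (mem_span_singleton_self a))

lemma sphere_diff_pair_preconnected (h3 : 3 ≤ finrank ℝ E) (p q : E) :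
    IsPreconnected ((sphere (0:E) 1) \ {p, q}) := by
  have hspan : ∀ a b : E, span ℝ ({a, b} : Set E) = span ℝ {a} ⊔ span ℝ {b} := by
    intro a b; rw [show ({a,b} : Set E) = insert a {b} from rfl, Submodule.span_insert]
  have hne : ∀ a b : E, span ℝ {a} ⊔ span ℝ {b} ≠ ⊤ := by
    intro a b h
    exact span_pair_ne_top h3 a b (by rw [hspan]; exact h)
  have hproper : ∀ a : E, span ℝ ({a} : Set E) ≠ ⊤ := by
    intro a h
    exact hne a a (by rw [h]; simp)
  set V : Set E := {v | v ∉ span ℝ {p} ∧ v ∉ span ℝ {q}} with hV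
  have hV0 : (0:E) ∉ V := fun h => h.1 (Submodule.zero_mem _)
  -- V path connected
  have hVpc : IsPathConnected V := by
    rw [isPathConnected_iff]
    constructor
    · obtain ⟨c, hc⟩ := exists_not_mem_four
        ![span ℝ {p}, span ℝ {q}, span ℝ {p}, span ℝ {q}] (by
          intro i; fin_cases i <;> first
            | exact hproper p | exact hproper q)
      exact ⟨c, hc 0, hc 1⟩
    · intro a ha b hb
      obtain ⟨c, hc⟩ := exists_not_mem_four
        ![span ℝ {a} ⊔ span ℝ {p}, span ℝ {a} ⊔ span ℝ {q},
          span ℝ {b} ⊔ span ℝ {p}, span ℝ {b} ⊔ span ℝ {q}] (by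
          intro i; fin_cases i <;> simp only [Matrix.cons_val_zero, Matrix.cons_val_one,
            Matrix.cons_val_two, Matrix.cons_val_three] <;> exact hne _ _)
      have hcV : c ∈ V := by
        constructor
        · exact fun h => hc 0 (Submodule.mem_sup_right h)
        · exact fun h => hc 1 (Submodule.mem_sup_right h)
      have j1 : JoinedIn V a c := by
        apply JoinedIn.of_segment_subset
        intro w hw
        exact ⟨segment_avoid _ ha.1 (hc 0) hw, segment_avoid _ ha.2 (hc 1) hw⟩
      have j2 : JoinedIn V b c := by
        apply JoinedIn.of_segment_subset
        intro w hw
        exact ⟨segment_avoid _ hb.1 (hc 2) hw, segment_avoid _ hb.2 (hc 3) hw⟩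
      exact j1.trans j2.symm
  -- normalization
  set g : E → E := fun v => ‖v‖⁻¹ • v with hg
  have hgc : ∀ v : E, v ≠ 0 → ContinuousAt g v := by
    intro v hv
    exact (continuousAt_id.norm.inv₀ (norm_ne_zero_iff.mpr hv)).smul continuousAt_id
  have hgcOn : ContinuousOn g V := by
    intro v hv
    exact (hgc v (fun h0 => hV0 (h0 ▸ hv))).continuousWithinAt
  set S₀ : Set E := g '' V with hS₀def
  have hS₀pc : IsPathConnected S₀ := hVpc.image' hgcOn
  have hsub : S₀ ⊆ (sphere (0:E) 1) \ {p, q} := by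
    rintro - ⟨v, hv, rfl⟩
    have hv0 : v ≠ 0 := fun h0 => hV0 (h0 ▸ hv)
    have hvn : ‖v‖ ≠ 0 := norm_ne_zero_iff.mpr hv0
    have hnorm : ‖g v‖ = 1 := by
      simp only [hg, norm_smul, norm_inv, norm_norm]
      exact inv_mul_cancel₀ hvn
    have hback : ∀ w : E, g v = w → v ∈ span ℝ ({w} : Set E) := by
      intro w hw
      have : v = ‖v‖ • w := by
        rw [← hw, hg]; simp [smul_smul, mul_inv_cancel₀ hvn]
      rw [this]
      exact Submodule.smul_mem _ _ (mem_span_singleton_self w)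
    refine ⟨mem_sphere_zero_iff_norm.mpr hnorm, ?_⟩
    intro hmem
    rcases hmem with h | h
    · exact hv.1 (hback p h)
    · exact hv.2 (hback q (by simpa using h))
  have hclo : (sphere (0:E) 1) \ {p, q} ⊆ closure S₀ := by
    rintro y ⟨hys, hypq⟩
    have hy1 : ‖y‖ = 1 := mem_sphere_zero_iff_norm.mp hys
    have hy0 : y ≠ 0 := fun h => by simp [h] at hy1
    obtain ⟨u, hu⟩ := exists_not_mem_four
      ![span ℝ {y} ⊔ span ℝ {p}, span ℝ {y} ⊔ span ℝ {q},
        span ℝ {y} ⊔ span ℝ {p}, span ℝ {y} ⊔ span ℝ {q}] (by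
        intro i; fin_cases i <;> first | exact hne y p | exact hne y q)
    have hmemV : ∀ t : ℝ, t ≠ 0 → y + t • u ∈ V := by
      intro t ht
      have key : ∀ w : E, y + t • u ∈ span ℝ ({w} : Set E) →
          u ∈ span ℝ {y} ⊔ span ℝ {w} := by
        intro w hw
        have : u = t⁻¹ • ((y + t • u) - y) := by
          rw [add_sub_cancel_left, smul_smul, inv_mul_cancel₀ ht, one_smul]
        rw [this]
        refine Submodule.smul_mem _ _ (Submodule.sub_mem _ ?_ ?_)
        · exact Submodule.mem_sup_right hw
        · exact Submodule.mem_sup_left (mem_span_singleton_self y)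
      exact ⟨fun h => hu 0 (key p h), fun h => hu 1 (key q h)⟩
    have htend : Filter.Tendsto (fun t : ℝ => g (y + t • u)) (nhdsWithin 0 {0}ᶜ) (nhds y) := by
      have h1 : ContinuousAt (fun t : ℝ => y + t • u) 0 := by fun_prop
      have h2 : ContinuousAt g y := hgc y hy0
      have hA : Filter.Tendsto (fun t : ℝ => y + t • u) (nhds 0) (nhds y) := by
        have := h1.tendsto; simpa using this
      have h4 : g y = y := by rw [hg]; simp [hy1]
      have h5 : Filter.Tendsto (fun t : ℝ => g (y + t • u)) (nhds 0) (nhds (g y)) :=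
        h2.tendsto.comp hA
      rw [h4] at h5
      exact h5.mono_left nhdsWithin_le_nhds
    apply mem_closure_of_tendsto htend
    filter_upwards [self_mem_nhdsWithin] with t ht
    exact Set.mem_image_of_mem g (hmemV t ht)
  exact hS₀pc.isConnected.isPreconnected.subset_closure hsub hclo

end ClaimA

lemma not_preconnected_sphere_diff {X : Type*} [NormedAddCommGroup X] [NormedSpace ℝ X]
    (hdim : finrank ℝ X = 2) (x : X) (hx : ‖x‖ = 1) :
    ¬ IsPreconnected ((sphere (0:X) 1) \ {x, -x}) := by
  have hfd : FiniteDimensional ℝ X := Module.finite_of_finrank_eq_succ hdim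
  have hx0 : x ≠ 0 := fun h => by simp [h] at hx
  have hrank : 1 < Module.rank ℝ X := by
    rw [← finrank_eq_rank, hdim]
    exact_mod_cast one_lt_two
  obtain ⟨z, hz⟩ := exists_linearIndependent_pair_of_one_lt_rank hrank hx0
  have hcard : Fintype.card (Fin 2) = finrank ℝ X := by simp [hdim]
  let B := basisOfLinearIndependentOfCardEqFinrank hz hcard
  have hB : ⇑B = ![x, z] := coe_basisOfLinearIndependentOfCardEqFinrank hz hcard
  have hB0 : B 0 = x := by rw [hB]; rfl
  have hB1 : B 1 = z := by rw [hB]; rfl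
  let φ : X →ₗ[ℝ] ℝ := B.coord 1
  have hφcont : Continuous φ := LinearMap.continuous_of_finiteDimensional φ
  have hφx : φ x = 0 := by
    simp only [φ, Basis.coord_apply, ← hB0, Basis.repr_self]
    simp
  have hφz : φ z = 1 := by
    simp only [φ, Basis.coord_apply, ← hB1, Basis.repr_self]
    simp
  have hz0 : z ≠ 0 := by
    have := hz.ne_zero 1
    simpa using this
  have hker : ∀ y : X, ‖y‖ = 1 → φ y = 0 → y = x ∨ y = -x := by
    intro y hy hyφ
    have hrepr : y = B.repr y 0 • x + B.repr y 1 • z := by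
      conv_lhs => rw [← B.sum_repr y]
      rw [Fin.sum_univ_two, hB0, hB1]
    have h1 : B.repr y 1 = 0 := hyφ
    rw [h1, zero_smul, add_zero] at hrepr
    have : |B.repr y 0| = 1 := by
      rw [hrepr, norm_smul, hx, mul_one, Real.norm_eq_abs] at hy
      exact hy
    rcases abs_eq (le_of_lt one_pos) |>.mp this with h | h
    · left; rw [hrepr, h, one_smul]
    · right; rw [hrepr, h, neg_one_smul]
  intro hpre
  set w : X := ‖z‖⁻¹ • z with hw
  have hzn : ‖z‖ ≠ 0 := norm_ne_zero_iff.mpr hz0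
  have hwn : ‖w‖ = 1 := by
    rw [hw, norm_smul, norm_inv, norm_norm]
    exact inv_mul_cancel₀ hzn
  have hφw : φ w = ‖z‖⁻¹ := by rw [hw, map_smul, hφz, smul_eq_mul, mul_one]
  have hφwpos : 0 < φ w := by rw [hφw]; positivity
  have hwD : ∀ v : X, ‖v‖ = 1 → φ v ≠ 0 → v ∈ (sphere (0:X) 1) \ {x, -x} := by
    intro v hv hvφ
    refine ⟨mem_sphere_zero_iff_norm.mpr hv, ?_⟩
    intro hmem
    rcases hmem with h | h
    · subst h; exact hvφ hφx
    · simp only [Set.mem_singleton_iff] at h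
      subst h
      rw [map_neg, hφx, neg_zero] at hvφ
      exact hvφ rfl
  have h1 : w ∈ (sphere (0:X) 1) \ {x, -x} := hwD w hwn hφwpos.ne'
  have h2 : -w ∈ (sphere (0:X) 1) \ {x, -x} := by
    apply hwD (-w) (by rw [norm_neg]; exact hwn)
    rw [map_neg]
    simpa using hφwpos.ne'
  have hU : IsOpen {v : X | 0 < φ v} := isOpen_lt continuous_const hφcont
  have hW : IsOpen {v : X | φ v < 0} := isOpen_lt hφcont continuous_const
  have hcover : (sphere (0:X) 1) \ {x, -x} ⊆ {v : X | 0 < φ v} ∪ {v : X | φ v < 0} := by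
    intro y hy
    rcases lt_trichotomy (φ y) 0 with h | h | h
    · exact Or.inr h
    · rcases hker y (mem_sphere_zero_iff_norm.mp hy.1) h with rfl | rfl
      · exact absurd (Set.mem_insert _ _) hy.2
      · exact absurd (Set.mem_insert_of_mem _ rfl) hy.2
    · exact Or.inl h
  obtain ⟨v, hvD, hv1, hv2⟩ := hpre _ _ hU hW hcover
    ⟨w, h1, hφwpos⟩
    ⟨-w, h2, by simp only [Set.mem_setOf_eq, map_neg]; linarith⟩
  simp only [Set.mem_setOf_eq] at hv1 hv2
  linarith

open scoped Topology

theorem target_two_dimensional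
    (X : Type*) [NormedAddCommGroup X] [NormedSpace ℝ X]
    (hdim : finrank ℝ X = 2)
    (Y : Type*) [NormedAddCommGroup Y] [NormedSpace ℝ Y] [CompleteSpace Y]
    (f : sphere (0 : X) 1 → sphere (0 : Y) 1)
    (hsurj : Surjective f)
    (hiso : ∀ a b : sphere (0 : X) 1, dist (f a) (f b) = dist a b) :
    finrank ℝ Y = 2 := by
  have hfdX : FiniteDimensional ℝ X := Module.finite_of_finrank_eq_succ hdim
  have hXnt : Nontrivial X := Module.nontrivial_of_finrank_eq_succ hdim
  have hrankX : 1 < Module.rank ℝ X := by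
    rw [← finrank_eq_rank, hdim]; exact_mod_cast one_lt_two
  have hisoF : Isometry f := Isometry.of_dist_eq hiso
  have hinj : Injective f := hisoF.injective
  obtain ⟨x₀, hx₀⟩ : ∃ x : X, ‖x‖ = 1 := exists_norm_eq X zero_le_one
  have hx₀m : x₀ ∈ sphere (0:X) 1 := mem_sphere_zero_iff_norm.mpr hx₀
  let F : sphere (0:X) 1 → Y := fun a => (f a : Y)
  have hFc : Continuous F := continuous_subtype_val.comp hisoF.continuous
  have hFrange : Set.range F = (sphere (0:Y) 1 : Set Y) := by
    ext y
    constructor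
    · rintro ⟨a, rfl⟩; exact (f a).2
    · intro hy
      obtain ⟨a, ha⟩ := hsurj ⟨y, hy⟩
      exact ⟨a, by simp [F, ha]⟩
  have hcsX : IsCompact (sphere (0:X) 1 : Set X) := isCompact_sphere 0 1
  have hcompX : CompactSpace (sphere (0:X) 1) := isCompact_iff_compactSpace.mp hcsX
  have hcsY : IsCompact (sphere (0:Y) 1 : Set Y) := by
    rw [← hFrange]; exact isCompact_range hFc
  have hball : IsCompact (closedBall (0:Y) 1) := by
    have hIm : (fun p : ℝ × Y => p.1 • p.2) '' (Set.Icc (0:ℝ) 1 ×ˢ (sphere (0:Y) 1))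
        = closedBall (0:Y) 1 := by
      apply Set.Subset.antisymm
      · rintro - ⟨⟨t, y⟩, ⟨⟨ht0, ht1⟩, hy⟩, rfl⟩
        have hyn : ‖y‖ = 1 := mem_sphere_zero_iff_norm.mp hy
        rw [mem_closedBall_zero_iff, norm_smul, hyn, mul_one, Real.norm_eq_abs,
          abs_of_nonneg ht0]
        exact ht1
      · intro z hz
        rw [mem_closedBall_zero_iff] at hz
        rcases eq_or_ne z 0 with rfl | hz0
        · exact ⟨⟨0, F ⟨x₀, hx₀m⟩⟩, ⟨⟨le_refl 0, zero_le_one⟩, by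
            rw [← hFrange]; exact Set.mem_range_self _⟩, by simp⟩
        · refine ⟨⟨‖z‖, ‖z‖⁻¹ • z⟩, ⟨⟨norm_nonneg z, hz⟩, ?_⟩, ?_⟩
          · rw [mem_sphere_zero_iff_norm, norm_smul, norm_inv, norm_norm]
            exact inv_mul_cancel₀ (norm_ne_zero_iff.mpr hz0)
          · simp only [smul_smul]
            rw [mul_inv_cancel₀ (norm_ne_zero_iff.mpr hz0), one_smul]
    rw [← hIm]
    exact (isCompact_Icc.prod hcsY).image (continuous_fst.smul continuous_snd)
  have hfdY : FiniteDimensional ℝ Y := .of_isCompact_closedBall₀ ℝ one_pos hball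
  have hpreX : IsPreconnected (sphere (0:X) 1 : Set X) :=
    (isConnected_sphere hrankX 0 zero_le_one).isPreconnected
  have hpcX : PreconnectedSpace (sphere (0:X) 1) :=
    isPreconnected_iff_preconnectedSpace.mp hpreX
  have hpreY : IsPreconnected (sphere (0:Y) 1 : Set Y) := by
    rw [← hFrange]; exact isPreconnected_range hFc
  -- finrank Y ≠ 0
  have h0 : finrank ℝ Y ≠ 0 := by
    intro h
    have : Subsingleton Y := finrank_zero_iff.mp h
    have hy := (f ⟨x₀, hx₀m⟩).2
    have h2 : ((f ⟨x₀, hx₀m⟩ : Y)) = 0 := Subsingleton.elim _ _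
    have h3' := mem_sphere_zero_iff_norm.mp hy
    rw [h2, norm_zero] at h3'
    exact zero_ne_one h3' 
  -- finrank Y ≠ 1
  have h1 : finrank ℝ Y ≠ 1 := by
    intro h
    have hYnt : Nontrivial Y := Module.nontrivial_of_finrank_eq_succ h
    obtain ⟨u, hu⟩ : ∃ u : Y, ‖u‖ = 1 := exists_norm_eq Y zero_le_one
    have hu0 : u ≠ 0 := fun h' => by simp [h'] at hu
    have hsub : (sphere (0:Y) 1 : Set Y) ⊆ {u, -u} := by
      intro y hy
      obtain ⟨c, hc⟩ := (finrank_eq_one_iff_of_nonzero' u hu0).mp h y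
      have : |c| = 1 := by
        have := mem_sphere_zero_iff_norm.mp hy
        rw [← hc, norm_smul, hu, mul_one, Real.norm_eq_abs] at this
        exact this
      rcases (abs_eq zero_le_one).mp this with rfl | rfl
      · left; rw [← hc, one_smul]
      · right; rw [← hc, neg_one_smul]; rfl
    have huu : dist u (-u) = 2 := by
      rw [dist_eq_norm, sub_neg_eq_add, ← two_smul ℝ u, norm_smul, hu]
      simp
    obtain ⟨v, hvs, hv1, hv2⟩ := hpreY (ball u 1) (ball (-u) 1) isOpen_ball isOpen_ball
      (by
        intro y hy
        rcases hsub hy with rfl | rfl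
        · exact Or.inl (mem_ball_self one_pos)
        · exact Or.inr (mem_ball_self one_pos))
      ⟨u, mem_sphere_zero_iff_norm.mpr hu, mem_ball_self one_pos⟩
      ⟨-u, mem_sphere_zero_iff_norm.mpr (by rw [norm_neg]; exact hu), mem_ball_self one_pos⟩
    rcases hsub hvs with rfl | rfl
    · rw [mem_ball, huu] at hv2; linarith
    · rw [mem_ball, dist_comm, huu] at hv1; linarith
  -- finrank Y < 3
  have h3 : ¬ 3 ≤ finrank ℝ Y := by
    intro h3
    have hnx₀m : -x₀ ∈ sphere (0:X) 1 := by
      rw [mem_sphere_zero_iff_norm, norm_neg]; exact hx₀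
    set a : sphere (0:X) 1 := ⟨x₀, hx₀m⟩ with ha
    set b : sphere (0:X) 1 := ⟨-x₀, hnx₀m⟩ with hb
    set p : Y := F a with hp
    set q : Y := F b with hq
    have hpc := sphere_diff_pair_preconnected h3 p q
    -- transfer to X
    let eIso : sphere (0:X) 1 ≃ᵢ sphere (0:Y) 1 :=
      { toEquiv := Equiv.ofBijective f ⟨hinj, hsurj⟩, isometry_toFun := hisoF }
    set B : Set (sphere (0:Y) 1) :=
      (Subtype.val) ⁻¹' ((sphere (0:Y) 1 : Set Y) \ {p, q}) with hB
    have hBpre : IsPreconnected B := by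
      rw [← Topology.IsInducing.subtypeVal.isPreconnected_image]
      have : Subtype.val '' B = (sphere (0:Y) 1 : Set Y) \ {p, q} := by
        rw [hB, Subtype.image_preimage_coe]
        exact Set.inter_eq_right.mpr Set.diff_subset
      rw [this]
      exact hpc
    have hCpre : IsPreconnected (eIso.symm '' B) :=
      hBpre.image _ eIso.symm.continuous.continuousOn
    have hDpre : IsPreconnected (Subtype.val '' (eIso.symm '' B)) :=
      Topology.IsInducing.subtypeVal.isPreconnected_image.mpr hCpre
    have hD : Subtype.val '' (eIso.symm '' B) = (sphere (0:X) 1 : Set X) \ {x₀, -x₀} := by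
      ext w
      constructor
      · rintro ⟨c, ⟨bb, hbB, hbc⟩, rfl⟩
        have hbb : bb = eIso c := by rw [← hbc, IsometryEquiv.apply_symm_apply]
        have hbB' : ((eIso c : sphere (0:Y) 1) : Y) ∈ (sphere (0:Y) 1 : Set Y) \ {p, q} := by
          rw [← hbb]; exact hbB
        refine ⟨c.2, ?_⟩
        intro hmem
        rcases hmem with hcx | hcx
        · have : c = a := Subtype.ext hcx
          apply hbB'.2
          left
          rw [this]
          rfl
        · have : c = b := Subtype.ext (by simpa using hcx)
          apply hbB'.2
          right
          rw [this]
          rfl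
      · rintro ⟨hw1, hw2⟩
        set c : sphere (0:X) 1 := ⟨w, hw1⟩ with hc
        have hmem : eIso c ∈ B := by
          rw [hB, Set.mem_preimage]
          refine ⟨(eIso c).2, ?_⟩
          intro hcon
          rcases hcon with hcp | hcp
          · have : f c = f a := Subtype.ext hcp
            have : c = a := hinj this
            exact hw2 (Or.inl (Subtype.ext_iff.mp this))
          · have : f c = f b := Subtype.ext (Set.mem_singleton_iff.mp hcp)
            have : c = b := hinj this
            exact hw2 (Or.inr (Set.mem_singleton_iff.mpr (Subtype.ext_iff.mp this)))
        exact ⟨c, ⟨eIso c, hmem, eIso.symm_apply_apply c⟩, rfl⟩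
    rw [hD] at hDpre
    exact not_preconnected_sphere_diff hdim x₀ hx₀ hDpre
  omega
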